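/- Partition theorem for reachability: let P be the transition function of a finite MC over finite nonempty state type S, let G ⊆ S, and let B = B_P(G) be the set of states with no path to G under P. Then for every state s, Prob_P(s, G) + AProb_P(s, B, G) = 1, i.e., the probability of reaching G and the probability of reaching B while avoiding G sum to one. -/
import Mathlib


open scoped Classical BigOperators

/-- `n`-step reachability probability `Pr_P^n(s, G)`. -/
noncomputable def Pr {S : Type*} [Fintype S] (P : S → S → ℝ) : ℕ → S → Set S → ℝ
  | 0, s, G => if s ∈ G then 1 else 0
  | n + 1, s, G => if s ∈ G then 1 else ∑ t, P s t * Pr P n t G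

/-- Reachability probability `Prob_P(s, G) = ⨆ n, Pr_P^n(s, G)`. -/
noncomputable def Prob {S : Type*} [Fintype S] (P : S → S → ℝ) (s : S) (G : Set S) : ℝ :=
  ⨆ n : ℕ, Pr P n s G

/-- `C`-restriction of `P`: states outside `C` are made absorbing. -/
noncomputable def restrictMC {S : Type*} (C : Set S) (P : S → S → ℝ) (s t : S) : ℝ :=
  if s ∈ C then P s t else (if t = s then 1 else 0)

/-- `n`-step probability of reaching `B` while avoiding `G`. -/
noncomputable def APr {S : Type*} [Fintype S] (P : S → S → ℝ) : ℕ → S → Set S → Set S → ℝ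
  | 0, s, B, _ => if s ∈ B then 1 else 0
  | n + 1, s, B, G => if s ∈ B then 1 else if s ∈ G then 0 else ∑ t, P s t * APr P n t B G

/-- `AProb_P(s, B, G) = ⨆ n, APr_P^n(s, B, G)`. -/
noncomputable def AProb {S : Type*} [Fintype S] (P : S → S → ℝ) (s : S) (B G : Set S) : ℝ :=
  ⨆ n : ℕ, APr P n s B G

/-- `s` has a path to `G` under `P`. -/
def HasPathTo {S : Type*} (P : S → S → ℝ) (s : S) (G : Set S) : Prop :=
  ∃ (m : ℕ) (u : ℕ → S), u 0 = s ∧ (∀ i < m, 0 < P (u i) (u (i + 1))) ∧ u m ∈ G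

/-- `B_P(G)`: the set of states with no path to `G` under `P`. -/
def BSet {S : Type*} (P : S → S → ℝ) (G : Set S) : Set S :=
  {s | ¬ HasPathTo P s G}

/-- Transition function `P_r` of the instantiated MC `D_r` of a family `𝔓`. -/
noncomputable def Pinst {S K : Type*} [Fintype K] (𝔓 : S → K → ℝ) (r : K → S) (s t : S) : ℝ :=
  ∑ k, if r k = t then 𝔓 s k else 0

/-- Parameter `k` occurs at some state of `C`. -/
def OccursIn {S K : Type*} (𝔓 : S → K → ℝ) (C : Set S) (k : K) : Prop :=
  ∃ s ∈ C, 0 < 𝔓 s k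

/-- `u` is reachable from `s0` under `P`. -/
def ReachableFrom {S : Type*} (P : S → S → ℝ) (s0 u : S) : Prop :=
  ∃ (m : ℕ) (v : ℕ → S), v 0 = s0 ∧ (∀ i < m, 0 < P (v i) (v (i + 1))) ∧ v m = u

set_option linter.unusedSectionVars false
set_option linter.unusedVariables false

noncomputable def Rem {S : Type*} [Fintype S] (P : S → S → ℝ) (A : Set S) : ℕ → S → ℝ
  | 0, s => if s ∈ A then 0 else 1
  | n + 1, s => if s ∈ A then 0 else ∑ t, P s t * Rem P A n t

section aux
variable {S : Type*} [Fintype S] {P : S → S → ℝ} {A G B : Set S}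

lemma Pr_nonneg (hP0 : ∀ s t, 0 ≤ P s t) : ∀ n s, 0 ≤ Pr P n s G := by
  intro n
  induction n with
  | zero => intro s; simp only [Pr]; split <;> norm_num
  | succ n ih =>
    intro s; simp only [Pr]; split
    · norm_num
    · exact Finset.sum_nonneg fun t _ => mul_nonneg (hP0 s t) (ih t)

lemma Pr_le_one (hP0 : ∀ s t, 0 ≤ P s t) (hP1 : ∀ s, ∑ t, P s t = 1) :
    ∀ n s, Pr P n s G ≤ 1 := by
  intro n
  induction n with
  | zero => intro s; simp only [Pr]; split <;> norm_num
  | succ n ih =>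
    intro s; simp only [Pr]; split
    · norm_num
    · calc ∑ t, P s t * Pr P n t G ≤ ∑ t, P s t := by
            exact Finset.sum_le_sum fun t _ => mul_le_of_le_one_right (hP0 s t) (ih t)
        _ = 1 := hP1 s

lemma APr_nonneg (hP0 : ∀ s t, 0 ≤ P s t) : ∀ n s, 0 ≤ APr P n s B G := by
  intro n
  induction n with
  | zero => intro s; simp only [APr]; split <;> norm_num
  | succ n ih =>
    intro s; simp only [APr]; split
    · norm_num
    · split
      · norm_num
      · exact Finset.sum_nonneg fun t _ => mul_nonneg (hP0 s t) (ih t)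

lemma APr_le_one (hP0 : ∀ s t, 0 ≤ P s t) (hP1 : ∀ s, ∑ t, P s t = 1) :
    ∀ n s, APr P n s B G ≤ 1 := by
  intro n
  induction n with
  | zero => intro s; simp only [APr]; split <;> norm_num
  | succ n ih =>
    intro s; simp only [APr]; split
    · norm_num
    · split
      · norm_num
      · calc ∑ t, P s t * APr P n t B G ≤ ∑ t, P s t := by
              exact Finset.sum_le_sum fun t _ => mul_le_of_le_one_right (hP0 s t) (ih t)
          _ = 1 := hP1 s

lemma Rem_nonneg (hP0 : ∀ s t, 0 ≤ P s t) : ∀ n s, 0 ≤ Rem P A n s := by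
  intro n
  induction n with
  | zero => intro s; simp only [Rem]; split <;> norm_num
  | succ n ih =>
    intro s; simp only [Rem]; split
    · norm_num
    · exact Finset.sum_nonneg fun t _ => mul_nonneg (hP0 s t) (ih t)

lemma Rem_le_one (hP0 : ∀ s t, 0 ≤ P s t) (hP1 : ∀ s, ∑ t, P s t = 1) :
    ∀ n s, Rem P A n s ≤ 1 := by
  intro n
  induction n with
  | zero => intro s; simp only [Rem]; split <;> norm_num
  | succ n ih =>
    intro s; simp only [Rem]; split
    · norm_num
    · calc ∑ t, P s t * Rem P A n t ≤ ∑ t, P s t := by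
            exact Finset.sum_le_sum fun t _ => mul_le_of_le_one_right (hP0 s t) (ih t)
        _ = 1 := hP1 s

lemma Rem_of_mem (hs : s ∈ A) : ∀ n, Rem P A n (s : S) = 0 := by
  intro n; cases n <;> simp [Rem, hs]

lemma Pr_mono (hP0 : ∀ s t, 0 ≤ P s t) : ∀ n s, Pr P n s G ≤ Pr P (n + 1) s G := by
  intro n
  induction n with
  | zero =>
    intro s; by_cases hs : s ∈ G
    · simp [Pr, hs]
    · simp only [Pr, if_neg hs]
      exact Finset.sum_nonneg fun t _ => mul_nonneg (hP0 s t) (Pr_nonneg hP0 0 t)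
  | succ n ih =>
    intro s; by_cases hs : s ∈ G
    · simp [Pr, hs]
    · simp only [Pr, if_neg hs]
      exact Finset.sum_le_sum fun t _ => mul_le_mul_of_nonneg_left (ih t) (hP0 s t)

lemma APr_mono (hP0 : ∀ s t, 0 ≤ P s t) : ∀ n s, APr P n s B G ≤ APr P (n + 1) s B G := by
  intro n
  induction n with
  | zero =>
    intro s; by_cases hs : s ∈ B
    · simp [APr, hs]
    · by_cases hg : s ∈ G
      · simp [APr, hs, hg]
      · simp only [APr, if_neg hs, if_neg hg]
        exact Finset.sum_nonneg fun t _ => mul_nonneg (hP0 s t) (APr_nonneg (G := G) hP0 0 t)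
  | succ n ih =>
    intro s; by_cases hs : s ∈ B
    · simp [APr, hs]
    · by_cases hg : s ∈ G
      · simp [APr, hs, hg]
      · simp only [APr, if_neg hs, if_neg hg]
        exact Finset.sum_le_sum fun t _ => mul_le_mul_of_nonneg_left (ih t) (hP0 s t)

lemma Rem_anti (hP0 : ∀ s t, 0 ≤ P s t) (hP1 : ∀ s, ∑ t, P s t = 1) :
    ∀ n s, Rem P A (n + 1) s ≤ Rem P A n s := by
  intro n
  induction n with
  | zero =>
    intro s; by_cases hs : s ∈ A
    · simp [Rem, hs]
    · simp only [Rem, if_neg hs]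
      calc ∑ t, P s t * Rem P A 0 t ≤ ∑ t, P s t :=
            Finset.sum_le_sum fun t _ => mul_le_of_le_one_right (hP0 s t) (Rem_le_one hP0 hP1 0 t)
        _ = 1 := hP1 s
  | succ n ih =>
    intro s; by_cases hs : s ∈ A
    · simp [Rem, hs]
    · simp only [Rem, if_neg hs]
      exact Finset.sum_le_sum fun t _ => mul_le_mul_of_nonneg_left (ih t) (hP0 s t)

lemma Rem_antitone (hP0 : ∀ s t, 0 ≤ P s t) (hP1 : ∀ s, ∑ t, P s t = 1) (s : S) :
    Antitone fun n => Rem P A n s :=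
  antitone_nat_of_succ_le fun n => Rem_anti hP0 hP1 n s

end aux


section struct
variable {S : Type*} [Fintype S] {P : S → S → ℝ} {G : Set S}

lemma not_mem_BSet_of_mem (hs : s ∈ G) : (s : S) ∉ BSet P G := by
  intro h
  exact h ⟨0, fun _ => s, rfl, by intro i hi; omega, hs⟩

lemma BSet_closed {s t : S} (hs : s ∈ BSet P G) (hpos : 0 < P s t) : t ∈ BSet P G := by
  intro ht
  obtain ⟨m, u, h0, hstep, hG⟩ := ht
  refine hs ⟨m + 1, fun i => if i = 0 then s else u (i - 1), rfl, ?_, by simpa using hG⟩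
  intro i hi
  match i with
  | 0 => simpa [h0] using hpos
  | j + 1 =>
    simpa using hstep j (by omega)

lemma Pr_eq_zero_of_BSet (hP0 : ∀ s t, 0 ≤ P s t) :
    ∀ n, ∀ s ∈ BSet P G, Pr P n s G = 0 := by
  intro n
  induction n with
  | zero =>
    intro s hs
    simp only [Pr, if_neg (fun hg => not_mem_BSet_of_mem hg hs)]
  | succ n ih =>
    intro s hs
    simp only [Pr, if_neg (fun hg => not_mem_BSet_of_mem hg hs)]
    refine Finset.sum_eq_zero fun t _ => ?_
    rcases lt_or_eq_of_le (hP0 s t) with hp | hp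
    · rw [ih t (BSet_closed hs hp), mul_zero]
    · rw [← hp, zero_mul]

lemma key_identity (hP0 : ∀ s t, 0 ≤ P s t) (hP1 : ∀ s, ∑ t, P s t = 1) :
    ∀ n s, Pr P n s G + APr P n s (BSet P G) G + Rem P (G ∪ BSet P G) n s = 1 := by
  intro n
  induction n with
  | zero =>
    intro s
    by_cases hg : s ∈ G
    · simp [Pr, APr, Rem, hg, not_mem_BSet_of_mem hg]
    · by_cases hb : s ∈ BSet P G
      · simp [Pr, APr, Rem, hg, hb]
      · simp [Pr, APr, Rem, hg, hb]
  | succ n ih =>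
    intro s
    by_cases hg : s ∈ G
    · simp [Pr, APr, Rem, hg, not_mem_BSet_of_mem hg]
    · by_cases hb : s ∈ BSet P G
      · have h0 : Pr P (n+1) s G = 0 := Pr_eq_zero_of_BSet hP0 (n+1) s hb
        simp only [APr, Rem, if_pos hb, if_pos (Set.mem_union_right G hb), h0]
        ring
      · have hA : s ∉ G ∪ BSet P G := by
          simp [hg, hb]
        simp only [Pr, APr, Rem, if_neg hg, if_neg hb, if_neg hA]
        have : ∀ t, P s t * Pr P n t G + P s t * APr P n t (BSet P G) G
            + P s t * Rem P (G ∪ BSet P G) n t = P s t := by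
          intro t
          have h := ih t
          calc P s t * Pr P n t G + P s t * APr P n t (BSet P G) G
              + P s t * Rem P (G ∪ BSet P G) n t
              = P s t * (Pr P n t G + APr P n t (BSet P G) G
                + Rem P (G ∪ BSet P G) n t) := by ring
            _ = P s t := by rw [h, mul_one]
        calc (∑ t, P s t * Pr P n t G) + (∑ t, P s t * APr P n t (BSet P G) G)
              + (∑ t, P s t * Rem P (G ∪ BSet P G) n t)
            = ∑ t, (P s t * Pr P n t G + P s t * APr P n t (BSet P G) G
              + P s t * Rem P (G ∪ BSet P G) n t) := by
              rw [Finset.sum_add_distrib, Finset.sum_add_distrib]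
          _ = ∑ t, P s t := Finset.sum_congr rfl fun t _ => this t
          _ = 1 := hP1 s

lemma Rem_lt_one_of_path (hP0 : ∀ s t, 0 ≤ P s t) (hP1 : ∀ s, ∑ t, P s t = 1)
    {A : Set S} (hGA : G ⊆ A) :
    ∀ m (s : S) (u : ℕ → S), u 0 = s → (∀ i < m, 0 < P (u i) (u (i + 1))) → u m ∈ G →
      Rem P A m s < 1 := by
  intro m
  induction m with
  | zero =>
    intro s u h0 _ hG
    rw [← h0]
    simp [Rem, hGA hG]
  | succ m ih =>
    intro s u h0 hstep hG
    by_cases hs : s ∈ A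
    · simp [Rem, hs]
    · simp only [Rem, if_neg hs]
      have hlt : Rem P A m (u 1) < 1 :=
        ih (u 1) (fun i => u (i + 1)) rfl (fun i hi => hstep (i + 1) (by omega)) hG
      have hpos : 0 < P s (u 1) := h0 ▸ hstep 0 (by omega)
      calc ∑ t, P s t * Rem P A m t < ∑ t, P s t := by
            refine Finset.sum_lt_sum (fun t _ => mul_le_of_le_one_right (hP0 s t)
              (Rem_le_one hP0 hP1 m t)) ⟨u 1, Finset.mem_univ _, ?_⟩
            exact mul_lt_of_lt_one_right hpos hlt
        _ = 1 := hP1 s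

lemma Rem_submul (hP0 : ∀ s t, 0 ≤ P s t) {A : Set S} {n : ℕ} {b : ℝ} (hb : 0 ≤ b)
    (hbd : ∀ t, Rem P A n t ≤ b) : ∀ m s, Rem P A (n + m) s ≤ b * Rem P A m s := by
  intro m
  induction m with
  | zero =>
    intro s
    by_cases hs : s ∈ A
    · simp [Rem_of_mem hs]
    · simpa [Rem, hs] using hbd s
  | succ m ih =>
    intro s
    by_cases hs : s ∈ A
    · simp [Rem_of_mem hs, show n + (m+1) = (n+m)+1 from rfl, Rem, hs]
    · have h1 : Rem P A (n + (m + 1)) s = ∑ t, P s t * Rem P A (n + m) t := by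
        rw [show n + (m+1) = (n+m)+1 from rfl]
        simp [Rem, hs]
      rw [h1]
      have h2 : Rem P A (m + 1) s = ∑ t, P s t * Rem P A m t := by simp [Rem, hs]
      rw [h2, Finset.mul_sum]
      refine Finset.sum_le_sum fun t _ => ?_
      calc P s t * Rem P A (n + m) t ≤ P s t * (b * Rem P A m t) :=
            mul_le_mul_of_nonneg_left (ih t) (hP0 s t)
        _ = b * (P s t * Rem P A m t) := by ring

end struct

open Filter Topology

lemma Rem_tendsto_zero {S : Type*} [Fintype S] [Nonempty S] {P : S → S → ℝ} {G : Set S}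
    (hP0 : ∀ s t, 0 ≤ P s t) (hP1 : ∀ s, ∑ t, P s t = 1) (s : S) :
    Tendsto (fun n => Rem P (G ∪ BSet P G) n s) atTop (𝓝 0) := by
  set A : Set S := G ∪ BSet P G with hA
  have hex : ∀ u : S, ∃ m, Rem P A m u < 1 := by
    intro u
    by_cases hu : u ∈ A
    · exact ⟨0, by simp [Rem, hu]⟩
    · have hp : HasPathTo P u G := by
        by_contra h
        exact hu (Set.mem_union_right G h)
      obtain ⟨m, w, h0, hstep, hG⟩ := hp
      exact ⟨m, Rem_lt_one_of_path hP0 hP1 Set.subset_union_left m u w h0 hstep hG⟩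
  choose f hf using hex
  set M : ℕ := Finset.univ.sup f with hM
  have hMlt : ∀ u : S, Rem P A M u < 1 := fun u =>
    lt_of_le_of_lt (Rem_antitone hP0 hP1 u (Finset.le_sup (Finset.mem_univ u))) (hf u)
  set c : ℝ := Finset.univ.sup' Finset.univ_nonempty (fun u : S => Rem P A M u) with hc
  have hc1 : c < 1 := by
    rw [hc]
    exact (Finset.sup'_lt_iff Finset.univ_nonempty).mpr fun u _ => hMlt u
  have hc0 : 0 ≤ c := by
    obtain ⟨u⟩ := ‹Nonempty S›
    exact le_trans (Rem_nonneg hP0 M u) (Finset.le_sup' _ (Finset.mem_univ u))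
  have hck : ∀ k, ∀ u : S, Rem P A (M * k) u ≤ c ^ k := by
    intro k
    induction k with
    | zero => intro u; simpa using Rem_le_one hP0 hP1 0 u
    | succ k ih =>
      intro u
      have h1 : Rem P A (M * k + M) u ≤ c ^ k * Rem P A M u :=
        Rem_submul hP0 (pow_nonneg hc0 k) ih M u
      have h2 : Rem P A M u ≤ c := Finset.le_sup' _ (Finset.mem_univ u)
      calc Rem P A (M * (k + 1)) u = Rem P A (M * k + M) u := by ring_nf
        _ ≤ c ^ k * Rem P A M u := h1
        _ ≤ c ^ k * c := mul_le_mul_of_nonneg_left h2 (pow_nonneg hc0 k)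
        _ = c ^ (k + 1) := by ring
  have hbdd : BddBelow (Set.range fun n => Rem P A n s) :=
    ⟨0, by rintro x ⟨n, rfl⟩; exact Rem_nonneg hP0 n s⟩
  have hlim : Tendsto (fun n => Rem P A n s) atTop (𝓝 (⨅ n, Rem P A n s)) :=
    tendsto_atTop_ciInf (Rem_antitone hP0 hP1 s) hbdd
  have hL0 : (⨅ n, Rem P A n s) = 0 := by
    have hge : 0 ≤ ⨅ n, Rem P A n s := le_ciInf fun n => Rem_nonneg hP0 n s
    have hle : ∀ k, (⨅ n, Rem P A n s) ≤ c ^ k := fun k =>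
      le_trans (ciInf_le hbdd (M * k)) (hck k s)
    have : (⨅ n, Rem P A n s) ≤ 0 :=
      ge_of_tendsto' (tendsto_pow_atTop_nhds_zero_of_lt_one hc0 hc1) hle
    linarith
  rwa [hL0] at hlim


/-- partition theorem for reachability. -/
theorem stmt_11 {S : Type*} [Fintype S] [Nonempty S] (P : S → S → ℝ)
    (hP0 : ∀ s t, 0 ≤ P s t) (hP1 : ∀ s, ∑ t, P s t = 1)
    (G : Set S) (s : S) :
    Prob P s G + AProb P s (BSet P G) G = 1 := by
  unfold Prob AProb
  have hPrT : Tendsto (fun n => Pr P n s G) atTop (𝓝 (⨆ n : ℕ, Pr P n s G)) :=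
    tendsto_atTop_ciSup (monotone_nat_of_le_succ fun n => Pr_mono hP0 n s)
      ⟨1, by rintro x ⟨n, rfl⟩; exact Pr_le_one hP0 hP1 n s⟩
  have hAPrT : Tendsto (fun n => APr P n s (BSet P G) G) atTop
      (𝓝 (⨆ n : ℕ, APr P n s (BSet P G) G)) :=
    tendsto_atTop_ciSup (monotone_nat_of_le_succ fun n => APr_mono hP0 n s)
      ⟨1, by rintro x ⟨n, rfl⟩; exact APr_le_one hP0 hP1 n s⟩
  have hsum := hPrT.add hAPrT
  have hone : Tendsto (fun n => Pr P n s G + APr P n s (BSet P G) G) atTop (𝓝 1) := by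
    have h := tendsto_const_nhds (x := (1 : ℝ)) (f := atTop (α := ℕ))
    have h2 := h.sub (Rem_tendsto_zero (G := G) hP0 hP1 s)
    rw [sub_zero] at h2
    refine h2.congr fun n => ?_
    have := key_identity (G := G) hP0 hP1 n s
    linarith
  exact tendsto_nhds_unique hsum hone
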